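/- With $E$ the group defined by the twisted multiplication on $\mathbb{F}_p \times \mathbb{F}_p \times \mathbb{F}_p^\times \times \mathbb{F}_p^\times \times \mathbb{F}_p^\times$, the maps $\eta: \mathbb{F}_p^\times \to E$, $\mu \mapsto (0,0,1,1,\mu)$, and $\phi: E \to F \times F$, $(x,y,\lambda^m,\lambda^n,\mu) \mapsto ((x,\lambda^m),(y,\lambda^n))$, form a short exact sequence $1 \to \mathbb{F}_p^\times \xrightarrow{\eta} E \xrightarrow{\phi} F \times F \to 1$, with $\eta(\mathbb{F}_p^\times)$ central in $E$. -/
import Mathlib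


/-- The action of `𝔽_p^×` on `𝔽_p` by multiplication, as multiplicative
automorphisms. -/
def phiF (p : ℕ) : (ZMod p)ˣ →* MulAut (Multiplicative (ZMod p)) where
  toFun u := AddEquiv.toMultiplicative (DistribMulAction.toAddAut (ZMod p)ˣ (ZMod p) u)
  map_one' := by ext x; simp
  map_mul' u v := by ext x; simp [mul_smul]

/-- The affine group `F = 𝔽_p ⋊ 𝔽_p^×` of the line over `𝔽_p`. -/
abbrev Fgrp (p : ℕ) := SemidirectProduct (Multiplicative (ZMod p)) (ZMod p)ˣ (phiF p)

/-- The `l'`-part `O_{l'}(𝔽_p^×)`: the subgroup of elements of order coprime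
to `l`. -/
def Ul (l p : ℕ) : Subgroup (ZMod p)ˣ where
  carrier := {u | Nat.Coprime (orderOf u) l}
  one_mem' := by simp [Set.mem_setOf_eq, Nat.coprime_one_left]
  mul_mem' := by
    intro a b ha hb
    exact Nat.Coprime.coprime_dvd_left
      (Commute.orderOf_mul_dvd_mul_orderOf (mul_comm a b)) (Nat.Coprime.mul ha hb)
  inv_mem' := by
    intro a ha
    simpa [Set.mem_setOf_eq, orderOf_inv] using ha

/-- `F_{l'} = O_{l'}(F) = 𝔽_p ⋊ O_{l'}(𝔽_p^×)`, the preimage in `F` of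
`O_{l'}(𝔽_p^×)` under the projection to `𝔽_p^×`. -/
def Flp (l p : ℕ) : Subgroup (Fgrp p) :=
  Subgroup.comap (SemidirectProduct.rightHom : Fgrp p →* (ZMod p)ˣ) (Ul l p)

instance FlpNormal (l p : ℕ) : (Flp l p).Normal :=
  Subgroup.Normal.comap inferInstance _


/-- The underlying set of the group `E`: tuples `(x, y, λ^m, λ^n, μ)` with
`x, y ∈ 𝔽_p`, exponents `m, n` recorded in `ℤ/(p-1) ≅ 𝔽_p^×` (via the fixed
generator `λ`), and `μ ∈ 𝔽_p^×`. -/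
abbrev Ecar (p : ℕ) : Type :=
  ZMod p × ZMod p × ZMod (p - 1) × ZMod (p - 1) × (ZMod p)ˣ

/-- The multiplication of `E`:
`(x₁,y₁,λ^{m₁},λ^{n₁},μ₁)·(x₂,y₂,λ^{m₂},λ^{n₂},μ₂)
  = (x₁+λ^{m₁}x₂, y₁+λ^{n₁}y₂, λ^{m₁+m₂}, λ^{n₁+n₂}, μ₁μ₂λ^{n₁m₂})`. -/
def Emul (p : ℕ) (lam : (ZMod p)ˣ) (a b : Ecar p) : Ecar p :=
  (a.1 + ((lam ^ (a.2.2.1).val : (ZMod p)ˣ) : ZMod p) * b.1,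
   a.2.1 + ((lam ^ (a.2.2.2.1).val : (ZMod p)ˣ) : ZMod p) * b.2.1,
   a.2.2.1 + b.2.2.1,
   a.2.2.2.1 + b.2.2.2.1,
   a.2.2.2.2 * b.2.2.2.2 * lam ^ ((a.2.2.2.1).val * (b.2.2.1).val))

/-- The identity element `(0,0,λ⁰,λ⁰,1)` of `E`. -/
def Eone (p : ℕ) : Ecar p := (0, 0, 0, 0, 1)

/-- The map `η : 𝔽_p^× → E`, `μ ↦ (0,0,1,1,μ)`. -/
def etaE (p : ℕ) (mu : (ZMod p)ˣ) : Ecar p := (0, 0, 0, 0, mu)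

/-- The map `φ : E → F × F`, `(x,y,λ^m,λ^n,μ) ↦ ((x,λ^m),(y,λ^n))`. -/
def phiE (p : ℕ) (lam : (ZMod p)ˣ) (g : Ecar p) : Fgrp p × Fgrp p :=
  (⟨Multiplicative.ofAdd g.1, lam ^ (g.2.2.1).val⟩,
   ⟨Multiplicative.ofAdd g.2.1, lam ^ (g.2.2.2.1).val⟩)

/-- With `E` the group defined by the twisted multiplication on
`𝔽_p × 𝔽_p × 𝔽_p^× × 𝔽_p^× × 𝔽_p^×` (generator `λ` of `𝔽_p^×` fixed), the maps
`η : μ ↦ (0,0,1,1,μ)` and `φ : (x,y,λ^m,λ^n,μ) ↦ ((x,λ^m),(y,λ^n))` form a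
short exact sequence `1 → 𝔽_p^× → E → F × F → 1`, with `η(𝔽_p^×)` central in
`E`: `η` and `φ` are multiplicative, `η` is injective, `φ` is surjective, the
image of `η` is exactly the kernel of `φ`, and the image of `η` is central. -/
theorem stmt_8 (p : ℕ) (hp : p.Prime)
    (lam : (ZMod p)ˣ) (hlam : ∀ u : (ZMod p)ˣ, u ∈ Subgroup.zpowers lam) :
    (∀ mu₁ mu₂ : (ZMod p)ˣ,
        etaE p (mu₁ * mu₂) = Emul p lam (etaE p mu₁) (etaE p mu₂)) ∧
    Function.Injective (etaE p) ∧
    (∀ a b : Ecar p,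
        phiE p lam (Emul p lam a b) = phiE p lam a * phiE p lam b) ∧
    Function.Surjective (phiE p lam) ∧
    (∀ g : Ecar p, phiE p lam g = 1 ↔ ∃ mu : (ZMod p)ˣ, g = etaE p mu) ∧
    (∀ (mu : (ZMod p)ˣ) (g : Ecar p),
        Emul p lam (etaE p mu) g = Emul p lam g (etaE p mu)) := by
  haveI : Fact p.Prime := ⟨hp⟩
  haveI : NeZero (p - 1) := ⟨by have := hp.two_le; omega⟩
  have hord : orderOf lam = p - 1 := by
    rw [orderOf_eq_card_of_forall_mem_zpowers hlam]
    simp [ZMod.card_units_eq_totient, Nat.totient_prime hp]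
  have hmod : ∀ k : ℕ, lam ^ (k % (p - 1)) = lam ^ k := by
    intro k
    have h := pow_mod_orderOf (x := lam) (n := k)
    rwa [hord] at h
  have hpow : ∀ a b : ZMod (p - 1),
      lam ^ (a + b).val = lam ^ a.val * lam ^ b.val := by
    intro a b
    rw [ZMod.val_add, hmod, pow_add]
  have hone : ∀ m : ZMod (p - 1), lam ^ m.val = 1 → m = 0 := by
    intro m hm
    have hdvd := orderOf_dvd_of_pow_eq_one hm
    rw [hord] at hdvd
    have hlt := m.val_lt
    exact (ZMod.val_eq_zero m).mp (Nat.eq_zero_of_dvd_of_lt hdvd hlt)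
  refine ⟨?_, ?_, ?_, ?_, ?_, ?_⟩
  · intro mu₁ mu₂
    simp [etaE, Emul]
  · intro mu₁ mu₂ h
    simpa [etaE, Prod.ext_iff] using h
  · intro a b
    obtain ⟨x₁, y₁, m₁, n₁, u₁⟩ := a
    obtain ⟨x₂, y₂, m₂, n₂, u₂⟩ := b
    exact Prod.ext (SemidirectProduct.ext rfl (hpow m₁ m₂))
      (SemidirectProduct.ext rfl (hpow n₁ n₂))
  · rintro ⟨⟨x, u⟩, ⟨y, v⟩⟩
    obtain ⟨k, hk⟩ := mem_powers_iff_mem_zpowers.mpr (hlam u)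
    obtain ⟨l, hl⟩ := mem_powers_iff_mem_zpowers.mpr (hlam v)
    have hk' : lam ^ ((k : ZMod (p - 1)).val) = u := by
      rw [ZMod.val_natCast, hmod]; exact hk
    have hl' : lam ^ ((l : ZMod (p - 1)).val) = v := by
      rw [ZMod.val_natCast, hmod]; exact hl
    exact ⟨(x.toAdd, y.toAdd, (k : ZMod (p - 1)), (l : ZMod (p - 1)), 1),
      Prod.ext (SemidirectProduct.ext rfl hk') (SemidirectProduct.ext rfl hl')⟩
  · intro g
    obtain ⟨x, y, m, n, u⟩ := g
    constructor
    · intro h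
      rw [Prod.ext_iff, SemidirectProduct.ext_iff, SemidirectProduct.ext_iff] at h
      obtain ⟨⟨h1, h2⟩, h3, h4⟩ := h
      simp only [phiE] at h1 h2 h3 h4
      refine ⟨u, ?_⟩
      have hx : x = 0 := by simpa using h1
      have hy : y = 0 := by simpa using h3
      have hm : m = 0 := hone _ (by simpa using h2)
      have hn : n = 0 := hone _ (by simpa using h4)
      simp [etaE, hx, hy, hm, hn]
    · rintro ⟨mu, h⟩
      rw [h]
      refine Prod.ext (SemidirectProduct.ext ?_ ?_) (SemidirectProduct.ext ?_ ?_) <;>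
        simp [phiE, etaE]
  · intro mu g
    obtain ⟨x, y, m, n, u⟩ := g
    simp [etaE, Emul, mul_comm]
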